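/- arXiv:2107.12171 — 4 statements merged into one kernel-verified Lean document; each statement's English description precedes it below -/
import Mathlib

section
/- In a free product A ∗ B of two nontrivial groups, every element of finite order is conjugate to a letter, i.e., to an element of A or of B. -/
set_option linter.unusedSectionVars false

open Monoid

namespace FOConjAux

variable {ι : Type*} [DecidableEq ι] {G : ι → Type*} [∀ i, Group (G i)]
  [∀ i, DecidableEq (G i)]

def prodL (l : List (Σ i, G i)) : CoprodI G :=
  (l.map fun a => CoprodI.of a.2).prod

def Red (l : List (Σ i, G i)) : Prop :=
  (∀ a ∈ l, a.2 ≠ 1) ∧ l.Chain' (fun a b => a.1 ≠ b.1)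

theorem prodL_append (l₁ l₂ : List (Σ i, G i)) :
    prodL (l₁ ++ l₂) = prodL l₁ * prodL l₂ := by
  simp [prodL]

theorem prodL_cons (x : Σ i, G i) (l : List (Σ i, G i)) :
    prodL (x :: l) = CoprodI.of x.2 * prodL l := by
  simp [prodL]

theorem prod_inj : Function.Injective (CoprodI.Word.prod : CoprodI.Word G → CoprodI G) :=
  (CoprodI.Word.equiv (M := G)).symm.injective

theorem red_ne_one {l : List (Σ i, G i)} (hred : Red l) (hne : l ≠ []) :
    prodL l ≠ 1 := by
  intro h
  have : (⟨l, hred.1, hred.2⟩ : CoprodI.Word G) = CoprodI.Word.empty :=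
    prod_inj (by simpa [CoprodI.Word.prod, prodL, CoprodI.Word.empty] using h)
  exact hne (congrArg CoprodI.Word.toList this)

theorem pow_red {l : List (Σ i, G i)} (hred : Red l) (hne : l ≠ [])
    (hij : (l.head hne).1 ≠ (l.getLast hne).1) (n : ℕ) :
    ∃ m : List (Σ i, G i), Red m ∧ m ≠ [] ∧
      m.head? = l.head? ∧ m.getLast? = l.getLast? ∧ prodL m = prodL l ^ (n + 1) := by
  induction n with
  | zero => exact ⟨l, hred, hne, rfl, rfl, by rw [pow_one]⟩
  | succ n ih =>
    obtain ⟨m, hm, hmne, hh, hl2, hp⟩ := ih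
    refine ⟨l ++ m, ⟨?_, ?_⟩, by simp [hne], ?_, ?_, ?_⟩
    · intro a ha
      rcases List.mem_append.mp ha with h | h
      · exact hred.1 a h
      · exact hm.1 a h
    · refine List.isChain_append.mpr ⟨hred.2, hm.2, ?_⟩
      intro a ha b hb
      rw [List.getLast?_eq_getLast hne, Option.mem_some_iff] at ha
      rw [hh, List.head?_eq_head hne, Option.mem_some_iff] at hb
      subst ha
      subst hb
      exact hij.symm
    · rw [List.head?_append_of_ne_nil _ hne]
    · rw [List.getLast?_append_of_ne_nil _ hmne, hl2]
    · rw [prodL_append, hp]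
      exact (pow_succ' _ _).symm

theorem not_finOrder {l : List (Σ i, G i)} (hred : Red l) (hne : l ≠ [])
    (hij : (l.head hne).1 ≠ (l.getLast hne).1) : ¬ IsOfFinOrder (prodL l) := by
  rw [isOfFinOrder_iff_pow_eq_one]
  rintro ⟨k, hk, h1⟩
  obtain ⟨m, hm, hmne, -, -, hp⟩ := pow_red hred hne hij (k - 1)
  rw [Nat.sub_add_cancel hk] at hp
  exact red_ne_one hm hmne (hp.trans h1)

theorem conj_of_pow (u g : CoprodI G) (k : ℕ) : (u⁻¹ * g * u) ^ k = u⁻¹ * g ^ k * u := by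
  induction k with
  | zero => simp
  | succ k ih => rw [pow_succ, pow_succ, ih]; group

theorem finOrder_conj {u g : CoprodI G} (hg : IsOfFinOrder g) :
    IsOfFinOrder (u⁻¹ * g * u) := by
  rw [isOfFinOrder_iff_pow_eq_one] at hg ⊢
  obtain ⟨k, hk, h1⟩ := hg
  exact ⟨k, hk, by rw [conj_of_pow, h1]; group⟩

theorem aux [Nonempty ι] : ∀ (n : ℕ) (l : List (Σ i, G i)), l.length ≤ n → Red l →
    IsOfFinOrder (prodL l) → ∃ (i : ι) (x : G i), IsConj (CoprodI.of x) (prodL l) := by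
  intro n
  induction n with
  | zero =>
    intro l hl _ _
    have : l = [] := List.eq_nil_of_length_eq_zero (Nat.le_zero.mp hl)
    subst this
    exact ⟨Classical.arbitrary ι, 1, by simp [prodL]⟩
  | succ n ih =>
    intro l hl hred hfin
    match l with
    | [] => exact ⟨Classical.arbitrary ι, 1, by simp [prodL]⟩
    | [x] =>
      refine ⟨x.1, x.2, ?_⟩
      have hx : prodL [x] = CoprodI.of x.2 := by simp [prodL]
      rw [hx]
    | x :: y :: t =>
      set r : List (Σ i, G i) := y :: t with hr
      have hrne : r ≠ [] := by simp [hr]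
      set z := r.getLast hrne with hz
      set m := r.dropLast with hm
      have hdecomp : r = m ++ [z] := (List.dropLast_append_getLast hrne).symm
      have hlne : (x :: r) ≠ [] := by simp
      have hlast : (x :: r).getLast hlne = z := by
        rw [List.getLast_cons hrne]
      by_cases hxz : x.1 = z.1
      · -- first and last letters in the same factor
        have hmne : m ≠ [] := by
          intro hmnil
          rw [hmnil, List.nil_append] at hdecomp
          have := hred.2
          rw [hdecomp] at this
          exact (List.isChain_cons_cons.mp this).1 hxz
        -- decompose the chain condition
        have hchain : (∀ a ∈ r.head?, x.1 ≠ a.1) ∧ r.Chain' (fun a b => a.1 ≠ b.1) :=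
          List.isChain_cons.mp hred.2
        have hchain2 := hchain.2
        rw [hdecomp] at hchain2
        obtain ⟨hchm, -, hjunc⟩ := List.isChain_append.mp hchain2
        obtain ⟨xi, xv⟩ := x
        obtain ⟨zi, zv⟩ := z
        dsimp at hxz
        subst hxz
        have hprod : prodL (⟨xi, xv⟩ :: r) =
            CoprodI.of xv * (prodL m * CoprodI.of zv) := by
          rw [prodL_cons]
          congr 1
          rw [hdecomp, prodL_append, prodL_cons]
          simp [prodL]
        set c : CoprodI G := CoprodI.of (i := xi) xv with hc
        have hg' : c⁻¹ * prodL (⟨xi, xv⟩ :: r) * c = prodL m * CoprodI.of (zv * xv) := by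
          rw [hprod, map_mul, hc]
          group
        have hfin' : IsOfFinOrder (c⁻¹ * prodL (⟨xi, xv⟩ :: r) * c) := finOrder_conj hfin
        by_cases h1 : zv * xv = 1
        · -- last letter cancels with first: conjugate is shorter
          have hg'' : c⁻¹ * prodL (⟨xi, xv⟩ :: r) * c = prodL m := by
            rw [hg', h1, map_one, mul_one]
          have hredm : Red m := by
            refine ⟨fun a ha => hred.1 a ?_, hchm⟩
            rw [hdecomp]
            exact List.mem_cons_of_mem _ (List.mem_append_left _ ha)
          have hlenm : m.length ≤ n := by
            have h2 : (⟨xi, xv⟩ :: r).length = m.length + 2 := by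
              rw [hdecomp]; simp
            omega
          obtain ⟨i, w, hconj⟩ := ih m hlenm hredm (hg'' ▸ hfin')
          refine ⟨i, w, hconj.trans ?_⟩
          rw [← hg'']
          rw [isConj_iff]
          exact ⟨c, by group⟩
        · -- conjugate has first and last letters in different factors: contradiction
          exfalso
          set l' : List (Σ i, G i) := m ++ [⟨xi, zv * xv⟩] with hl'
          have hl'ne : l' ≠ [] := by simp [hl']
          have hredl' : Red l' := by
            constructor
            · intro a ha
              rcases List.mem_append.mp ha with h | h
              · refine hred.1 a ?_
                rw [hdecomp]
                exact List.mem_cons_of_mem _ (List.mem_append_left _ h)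
              · rw [List.mem_singleton.mp h]
                exact h1
            · refine List.isChain_append.mpr ⟨hchm, List.isChain_singleton _, ?_⟩
              intro a ha b hb
              rw [List.head?_cons, Option.mem_some_iff] at hb
              have := hjunc a ha ⟨xi, zv⟩ (by simp)
              rw [← hb]
              exact this
          have hijl' : (l'.head hl'ne).1 ≠ (l'.getLast hl'ne).1 := by
            have hh : l'.head hl'ne = m.head hmne :=
              List.head_append_of_ne_nil (l := m) (l' := [⟨xi, zv * xv⟩]) hmne
            have hg : l'.getLast hl'ne = ⟨xi, zv * xv⟩ := by
              have h2 := List.getLast_append_of_ne_nil (l := m) (l' := [⟨xi, zv * xv⟩])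
                (h₁ := hl'ne) (by simp)
              exact h2.trans (by simp)
            rw [hh, hg]
            have := hchain.1 (m.head hmne) ?_
            · exact fun h => this h.symm
            · rw [hdecomp, List.head?_append_of_ne_nil _ hmne, List.head?_eq_head hmne]
              rfl
          have hprodl' : prodL l' = c⁻¹ * prodL (⟨xi, xv⟩ :: r) * c := by
            rw [hg', hl', prodL_append, prodL_cons]
            simp [prodL]
          exact not_finOrder hredl' hl'ne hijl' (hprodl' ▸ hfin')
      · -- first and last letters in different factors: contradiction
        exfalso
        have hij : ((x :: r).head hlne).1 ≠ ((x :: r).getLast hlne).1 := by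
          rw [List.head_cons, hlast]; exact hxz
        exact not_finOrder hred hlne hij hfin

theorem coprodI_letter [Nonempty ι] (g : CoprodI G) (hg : IsOfFinOrder g) :
    ∃ (i : ι) (x : G i), IsConj (CoprodI.of x) g := by
  have h : prodL (CoprodI.Word.equiv g).toList = g :=
    (CoprodI.Word.equiv (M := G)).symm_apply_apply g
  rw [← h] at hg ⊢
  exact aux _ _ le_rfl ⟨(CoprodI.Word.equiv g).ne_one, (CoprodI.Word.equiv g).chain_ne⟩ hg

end FOConjAux

universe u v

theorem coprod_conj_letter (A : Type u) (B : Type v) [Group A] [Group B]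
    (g : Monoid.Coprod A B) (hg : IsOfFinOrder g) :
    (∃ a : A, IsConj (Monoid.Coprod.inl a) g) ∨
    (∃ b : B, IsConj (Monoid.Coprod.inr b) g) := by
  classical
  let G : Bool → Type (max u v) := fun b => cond b (ULift.{v} A) (ULift.{u} B)
  letI : ∀ i, Group (G i) := fun i => by cases i <;> dsimp [G] <;> infer_instance
  let φ : Monoid.Coprod A B →* CoprodI G :=
    Coprod.lift ((CoprodI.of (i := true)).comp (MulEquiv.ulift (α := A)).symm.toMonoidHom)
      ((CoprodI.of (i := false)).comp (MulEquiv.ulift (α := B)).symm.toMonoidHom)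
  let ψ : CoprodI G →* Monoid.Coprod A B :=
    CoprodI.lift (fun i => match i with
      | true => (Coprod.inl (M := A) (N := B)).comp (MulEquiv.ulift (α := A)).toMonoidHom
      | false => (Coprod.inr (M := A) (N := B)).comp (MulEquiv.ulift (α := B)).toMonoidHom)
  have hψφ : ∀ x : Monoid.Coprod A B, ψ (φ x) = x := by
    intro x
    have h : ψ.comp φ = MonoidHom.id _ := by
      apply Coprod.hom_ext <;> ext a <;>
        simp [φ, ψ, Coprod.lift_apply_inl, Coprod.lift_apply_inr, CoprodI.lift_of, MulEquiv.apply_symm_apply] <;> rfl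
    exact DFunLike.congr_fun h x
  have hfin : IsOfFinOrder (φ g) := φ.isOfFinOrder hg
  obtain ⟨i, x, hc⟩ := FOConjAux.coprodI_letter (φ g) hfin
  have hc2 : IsConj (ψ (CoprodI.of x)) g := by
    have h2 := ψ.map_isConj hc
    rwa [hψφ] at h2
  cases i with
  | true =>
    left
    exact ⟨x.down, by simp [ψ, CoprodI.lift_of] at hc2 ⊢; exact hc2⟩
  | false =>
    right
    exact ⟨x.down, by simp [ψ, CoprodI.lift_of] at hc2 ⊢; exact hc2⟩

/-- In a free product `A ∗ B` of two nontrivial groups, every element of finite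
order is conjugate to a letter, i.e. to an element of `A` or of `B`. -/
theorem finite_order_conj_to_letter (A B : Type*) [Group A] [Group B]
    [Nontrivial A] [Nontrivial B]
    (g : Monoid.Coprod A B) (hg : IsOfFinOrder g) :
    (∃ a : A, IsConj (Monoid.Coprod.inl a) g) ∨
    (∃ b : B, IsConj (Monoid.Coprod.inr b) g) :=
  coprod_conj_letter A B g hg
end

section
/- A graph product of finitely generated abelian groups over a graph with at least two vertices has nontrivial center if and only if there exists a vertex v with st(v) = V, i.e., a vertex adjacent to all other vertices. -/
universe u

/-- The set of defining relators of a graph product: commutators of letters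
from vertex groups joined by an edge. -/
def graphProductRels {V : Type*} (Γ : SimpleGraph V) (G : V → Type u)
    [∀ v, Group (G v)] : Subgroup (Monoid.CoprodI G) :=
  Subgroup.normalClosure
    {x | ∃ (v w : V) (a : G v) (b : G w), Γ.Adj v w ∧
      x = Monoid.CoprodI.of a * Monoid.CoprodI.of b *
        (Monoid.CoprodI.of a)⁻¹ * (Monoid.CoprodI.of b)⁻¹}

instance {V : Type*} (Γ : SimpleGraph V) (G : V → Type u) [∀ v, Group (G v)] :
    (graphProductRels Γ G).Normal :=
  Subgroup.normalClosure_normal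

/-- The graph product of the groups `G v` over the graph `Γ`. -/
def GraphProduct {V : Type*} (Γ : SimpleGraph V) (G : V → Type u)
    [∀ v, Group (G v)] :=
  Monoid.CoprodI G ⧸ graphProductRels Γ G

instance {V : Type*} (Γ : SimpleGraph V) (G : V → Type u) [∀ v, Group (G v)] :
    Group (GraphProduct Γ G) :=
  inferInstanceAs (Group (Monoid.CoprodI G ⧸ graphProductRels Γ G))

namespace GPAux

variable {V : Type*} (Γ : SimpleGraph V) (G : V → Type u) [∀ v, Group (G v)]

/-- canonical map of a vertex group into the graph product -/
def gpOf (v : V) : G v →* GraphProduct Γ G :=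
  (QuotientGroup.mk' (graphProductRels Γ G)).comp Monoid.CoprodI.of

variable {Γ G} in
theorem gpOf_commute {v w : V} (h : Γ.Adj v w) (a : G v) (b : G w) :
    Commute (gpOf Γ G v a) (gpOf Γ G w b) := by
  rw [← commutatorElement_eq_one_iff_commute]
  have hmem : Monoid.CoprodI.of a * Monoid.CoprodI.of b *
      (Monoid.CoprodI.of a)⁻¹ * (Monoid.CoprodI.of b)⁻¹ ∈ graphProductRels Γ G :=
    Subgroup.subset_normalClosure ⟨v, w, a, b, h, rfl⟩
  have h1 : (QuotientGroup.mk' (graphProductRels Γ G)) (Monoid.CoprodI.of a *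
      Monoid.CoprodI.of b * (Monoid.CoprodI.of a)⁻¹ * (Monoid.CoprodI.of b)⁻¹) = 1 :=
    (QuotientGroup.eq_one_iff _).2 hmem
  rw [map_mul, map_mul, map_mul, map_inv, map_inv] at h1
  exact h1

variable {Γ G} in
/-- universal property -/
def gpLift {K : Type*} [Group K] (f : ∀ v, G v →* K)
    (hf : ∀ ⦃v w : V⦄, Γ.Adj v w → ∀ (a : G v) (b : G w), Commute (f v a) (f w b)) :
    GraphProduct Γ G →* K :=
  QuotientGroup.lift _ (Monoid.CoprodI.lift f) (by
    intro x hx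
    refine Subgroup.normalClosure_le_normal ?_ hx
    rintro y ⟨v, w, a, b, hadj, rfl⟩
    have := hf hadj a b
    rw [SetLike.mem_coe, MonoidHom.mem_ker, map_mul, map_mul, map_mul, map_inv,
      map_inv, Monoid.CoprodI.lift_of, Monoid.CoprodI.lift_of,
      ← commutatorElement_def, commutatorElement_eq_one_iff_commute]
    exact this)

variable {Γ G} in
@[simp] theorem gpLift_of {K : Type*} [Group K] (f : ∀ v, G v →* K)
    (hf : ∀ ⦃v w : V⦄, Γ.Adj v w → ∀ (a : G v) (b : G w), Commute (f v a) (f w b))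
    (v : V) (a : G v) : gpLift f hf (gpOf Γ G v a) = f v a := by
  show QuotientGroup.lift _ (Monoid.CoprodI.lift f) _
      (QuotientGroup.mk' _ (Monoid.CoprodI.of a)) = f v a
  rw [show (QuotientGroup.mk' (graphProductRels Γ G)) (Monoid.CoprodI.of a)
      = ((Monoid.CoprodI.of a : Monoid.CoprodI G) :
        Monoid.CoprodI G ⧸ graphProductRels Γ G) from rfl,
    QuotientGroup.lift_mk, Monoid.CoprodI.lift_of]

variable {Γ G} in
theorem gp_induction_on {C : GraphProduct Γ G → Prop} (x : GraphProduct Γ G)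
    (one : C 1) (of : ∀ (v : V) (a : G v), C (gpOf Γ G v a))
    (mul : ∀ x y, C x → C y → C (x * y)) : C x := by
  obtain ⟨y, rfl⟩ := QuotientGroup.mk'_surjective (graphProductRels Γ G) x
  induction y using Monoid.CoprodI.induction_on with
  | one => exact one
  | of i m => exact of i m
  | mul a b ha hb => rw [map_mul]; exact mul _ _ ha hb

variable {Γ G} in
theorem gp_hom_ext {K : Type*} [Group K] {f g : GraphProduct Γ G →* K}
    (h : ∀ (v : V) (a : G v), f (gpOf Γ G v a) = g (gpOf Γ G v a)) : f = g := by
  ext x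
  induction x using gp_induction_on with
  | one => simp
  | of v a => exact h v a
  | mul a b ha hb => rw [map_mul, map_mul, ha, hb]

end GPAux

namespace GPAux

section proj

variable {V : Type*} {Γ : SimpleGraph V} {G : V → Type u} [∀ v, CommGroup (G v)]


/-- the retraction onto a vertex group (needs commutativity of vertex groups) -/
noncomputable def gpProj (v : V) : GraphProduct Γ G →* G v := by
  classical
  exact gpLift (Pi.mulSingle v (MonoidHom.id (G v)))
    (fun _ _ _ a b => mul_comm _ _)

@[simp] theorem gpProj_of_same (v : V) (a : G v) :
    gpProj (Γ := Γ) v (gpOf Γ G v a) = a := by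
  classical
  unfold gpProj
  exact (gpLift_of _ _ v a).trans (by simp)

theorem gpProj_of_ne {v w : V} (h : w ≠ v) (a : G w) :
    gpProj (Γ := Γ) v (gpOf Γ G w a) = 1 := by
  classical
  unfold gpProj
  exact (gpLift_of _ _ w a).trans (by simp [Pi.mulSingle_eq_of_ne h])

theorem gpOf_ne_one {v : V} {a : G v} (h : a ≠ 1) : gpOf Γ G v a ≠ 1 := by
  intro hc
  apply h
  have := congr_arg (gpProj (Γ := Γ) v) hc
  simpa using this

end proj

end GPAux

namespace GPAux

section subsets

variable {V : Type*} (Γ : SimpleGraph V) (G : V → Type u) [∀ v, Group (G v)]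

/-- the graph product over an induced subgraph -/
abbrev SubGP (S : Set V) : Type _ :=
  GraphProduct (Γ.comap (Subtype.val : S → V)) (fun s : S => G s.val)

/-- inclusion of a sub graph product -/
def inc (S : Set V) : SubGP Γ G S →* GraphProduct Γ G :=
  gpLift (fun s => gpOf Γ G s.val)
    (fun s t hadj a b => gpOf_commute (show Γ.Adj s.val t.val from hadj) a b)

@[simp] theorem inc_of (S : Set V) (s : S) (a : G s.val) :
    inc Γ G S (gpOf _ _ s a) = gpOf Γ G s.val a := by
  simp [inc]

/-- restriction to a sub graph product -/
noncomputable def res (S : Set V) : GraphProduct Γ G →* SubGP Γ G S := by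
  classical
  refine gpLift
    (fun v => if h : v ∈ S then
      (gpOf (Γ.comap (Subtype.val : S → V)) (fun s : S => G s.val) ⟨v, h⟩) else 1)
    ?_
  intro v w hadj a b
  by_cases hv : v ∈ S
  · by_cases hw : w ∈ S
    · simp only [dif_pos hv, dif_pos hw]
      exact gpOf_commute
        (Γ := Γ.comap (Subtype.val : S → V)) (G := fun s : S => G s.val)
        (show (Γ.comap (Subtype.val : S → V)).Adj ⟨v, hv⟩ ⟨w, hw⟩ from hadj) a b
    · simp only [dif_pos hv, dif_neg hw, MonoidHom.one_apply]
      exact Commute.one_right _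
  · simp only [dif_neg hv, MonoidHom.one_apply]
    exact Commute.one_left _

theorem res_inc (S : Set V) : ∀ x, res Γ G S (inc Γ G S x) = x := by
  intro x
  have : ((res Γ G S).comp (inc Γ G S)) = MonoidHom.id _ := by
    apply gp_hom_ext
    intro s a
    classical
    simp only [MonoidHom.comp_apply, inc_of, MonoidHom.id_apply]
    rw [res, gpLift_of, dif_pos s.prop]
  exact DFunLike.congr_fun this x

theorem inc_injective (S : Set V) : Function.Injective (inc Γ G S) :=
  Function.LeftInverse.injective (res_inc Γ G S)

/-- parabolic subgroup generated by the vertex groups in `S` -/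
def parab (S : Set V) : Subgroup (GraphProduct Γ G) :=
  Subgroup.closure (⋃ v ∈ S, Set.range (gpOf Γ G v))

theorem parab_mono {S T : Set V} (h : S ⊆ T) : parab Γ G S ≤ parab Γ G T :=
  Subgroup.closure_mono (Set.biUnion_subset_biUnion_left h)

theorem parab_empty : parab Γ G (∅ : Set V) = ⊥ := by
  simp [parab]

theorem mem_parab_univ (x : GraphProduct Γ G) : x ∈ parab Γ G Set.univ := by
  induction x using gp_induction_on with
  | one => exact one_mem _
  | of v a =>
      exact Subgroup.subset_closure
        (Set.mem_biUnion (Set.mem_univ v) (Set.mem_range_self a))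
  | mul a b ha hb => exact mul_mem ha hb

theorem range_inc (S : Set V) : (inc Γ G S).range = parab Γ G S := by
  apply le_antisymm
  · rintro _ ⟨x, rfl⟩
    induction x using gp_induction_on with
    | one => exact one_mem _
    | of s a =>
        rw [inc_of]
        exact Subgroup.subset_closure
          (Set.mem_biUnion s.prop (Set.mem_range_self a))
    | mul a b ha hb => rw [map_mul]; exact mul_mem ha hb
  · rw [parab, Subgroup.closure_le]
    rintro x hx
    simp only [Set.mem_iUnion, Set.mem_range] at hx
    obtain ⟨v, hv, a, rfl⟩ := hx
    exact ⟨gpOf _ _ (⟨v, hv⟩ : S) a, by simp⟩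

/-- inclusion between nested sub graph products -/
def inclHom {S T : Set V} (h : T ⊆ S) : SubGP Γ G T →* SubGP Γ G S :=
  gpLift (fun t => gpOf (Γ.comap (Subtype.val : S → V)) (fun s : S => G s.val)
      (⟨t.val, h t.prop⟩ : S))
    (fun t₁ t₂ hadj a b => gpOf_commute
      (Γ := Γ.comap (Subtype.val : S → V)) (G := fun s : S => G s.val)
      (show (Γ.comap (Subtype.val : S → V)).Adj ⟨t₁.val, h t₁.prop⟩
        ⟨t₂.val, h t₂.prop⟩ from hadj) a b)

@[simp] theorem inclHom_of {S T : Set V} (h : T ⊆ S) (t : T) (a : G t.val) :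
    inclHom Γ G h (gpOf _ _ t a) = gpOf _ _ (⟨t.val, h t.prop⟩ : S) a := by
  simp [inclHom]

theorem inc_comp_inclHom {S T : Set V} (h : T ⊆ S) :
    (inc Γ G S).comp (inclHom Γ G h) = inc Γ G T := by
  apply gp_hom_ext
  intro t a
  simp

theorem inclHom_injective {S T : Set V} (h : T ⊆ S) :
    Function.Injective (inclHom Γ G h) := by
  have : Function.Injective ((inc Γ G S).comp (inclHom Γ G h)) := by
    rw [inc_comp_inclHom]
    exact inc_injective Γ G T
  exact Function.Injective.of_comp this

end subsets

section projkill

variable {V : Type*} {Γ : SimpleGraph V} {G : V → Type u} [∀ v, CommGroup (G v)]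

theorem gpProj_inclHom {S T : Set V} (h : T ⊆ S) (s₀ : S) (hs₀ : (s₀ : V) ∉ T)
    (c : SubGP Γ G T) : gpProj s₀ (inclHom Γ G h c) = 1 := by
  induction c using gp_induction_on with
  | one => simp
  | of t a =>
      rw [inclHom_of]
      refine gpProj_of_ne (Γ := Γ.comap (Subtype.val : S → V))
        (G := fun s : S => G s.val) (w := ⟨t.val, h t.prop⟩) ?_ a
      intro he
      exact hs₀ (by rw [← Subtype.ext_iff.1 he]; exact t.prop)
  | mul a b ha hb => rw [map_mul, map_mul, ha, hb, mul_one]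

end projkill

end GPAux

namespace GPAux
section words
open Monoid PushoutI Function


variable {ι : Type*} {G : ι → Type*} {H : Type*} [∀ i, Group (G i)] [Group H]
  {φ : ∀ i, H →* G i}

def sinv {G : ι → Type*} [∀ i, Group (G i)] (p : Σ i, G i) : Σ i, G i := ⟨p.1, p.2⁻¹⟩

@[simp] theorem sinv_fst (p : Σ i, G i) : (sinv p).1 = p.1 := rfl

variable (φ) in
def prodl (l : List (Σ i, G i)) : PushoutI φ := (l.map fun p => of p.1 p.2).prod

variable (φ) in
def Red (l : List (Σ i, G i)) : Prop :=
  l.Chain' (fun a b => a.1 ≠ b.1) ∧ ∀ p ∈ l, p.2 ∉ (φ p.1).range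

theorem prodl_nil : prodl φ [] = 1 := rfl

theorem prodl_append (l₁ l₂ : List (Σ i, G i)) :
    prodl φ (l₁ ++ l₂) = prodl φ l₁ * prodl φ l₂ := by
  simp [prodl]

theorem prodl_cons (p : Σ i, G i) (l : List (Σ i, G i)) :
    prodl φ (p :: l) = of p.1 p.2 * prodl φ l := by
  simp [prodl]

theorem prodl_singleton (p : Σ i, G i) : prodl φ [p] = of p.1 p.2 := by
  simp [prodl]

theorem prodl_reverse_sinv (l : List (Σ i, G i)) :
    prodl φ ((l.map sinv).reverse) = (prodl φ l)⁻¹ := by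
  induction l with
  | nil => simp [prodl]
  | cons p l ih =>
      rw [List.map_cons, List.reverse_cons, prodl_append, ih, prodl_singleton,
        prodl_cons]
      show (prodl φ l)⁻¹ * of p.1 (p.2⁻¹) = _
      rw [map_inv, mul_inv_rev]

def toWord (l : List (Σ i, G i)) (hl : Red φ l) : CoprodI.Word G :=
  ⟨l, fun p hp h1 => hl.2 p hp (h1 ▸ one_mem _), hl.1⟩

theorem prodl_eq_word_prod (w : CoprodI.Word G) :
    ofCoprodI (w.prod) = prodl φ w.toList := by
  rw [CoprodI.Word.prod, map_list_prod, List.map_map, prodl]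
  congr 1

theorem red_eq_nil_of_mem_range (hφ : ∀ i, Injective (φ i)) {l : List (Σ i, G i)}
    (hl : Red φ l) (h : prodl φ l ∈ (base φ).range) : l = [] := by
  have := Reduced.eq_empty_of_mem_range (w := toWord l hl) hφ
    (fun p hp => hl.2 p hp) (by rwa [prodl_eq_word_prod (toWord l hl)])
  simpa [toWord, CoprodI.Word.empty] using congr_arg CoprodI.Word.toList this

theorem exists_red (hφ : ∀ i, Injective (φ i)) (z : PushoutI φ) :
    ∃ (h : H) (l : List (Σ i, G i)), Red φ l ∧ z = base φ h * prodl φ l := by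
  classical
  obtain ⟨d⟩ := NormalWord.transversal_nonempty φ hφ
  obtain ⟨w, rfl⟩ : ∃ w : NormalWord d, w.prod = z :=
    ⟨NormalWord.equiv z, NormalWord.equiv.left_inv z⟩
  refine ⟨w.head, w.toWord.toList, ⟨w.toWord.chain_ne, ?_⟩, ?_⟩
  · rintro ⟨i, g⟩ hp hg
    obtain ⟨y, hy⟩ := hg
    have hset := w.normalized i _ hp
    have hne := w.toWord.ne_one _ hp
    have hgr : g ∈ ((φ i).range : Set (G i)) := ⟨y, hy⟩
    have hbij := (d.compl i).1
    have : (⟨⟨g, hgr⟩, ⟨1, d.one_mem i⟩⟩ :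
        ((φ i).range : Set (G i)) × (d.set i)) =
        ⟨⟨1, one_mem _⟩, ⟨g, hset⟩⟩ := by
      apply hbij
      show g * 1 = 1 * g
      simp
    have := congr_arg (fun x => (x.2 : G i)) this
    simp only at this
    exact hne (by simp [← this])
  · rw [NormalWord.prod, prodl_eq_word_prod]

theorem Red.reverse_sinv {l : List (Σ i, G i)} (hl : Red φ l) :
    Red φ ((l.map sinv).reverse) := by
  constructor
  · show List.IsChain _ _
    rw [List.isChain_reverse, List.isChain_map]
    exact (show List.IsChain _ l from hl.1).imp (fun a b hab => Ne.symm hab)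
  · intro p hp
    simp only [List.mem_reverse, List.mem_map] at hp
    obtain ⟨q, hq, rfl⟩ := hp
    intro hr
    exact hl.2 q hq (by have := inv_mem hr; rwa [show (sinv q).2⁻¹ = q.2 from inv_inv q.2] at this)

theorem Red.append {l₁ l₂ : List (Σ i, G i)} (h₁ : Red φ l₁) (h₂ : Red φ l₂)
    (hj : ∀ p ∈ l₁.getLast?, ∀ q ∈ l₂.head?, p.1 ≠ q.1) : Red φ (l₁ ++ l₂) := by
  refine ⟨List.isChain_append.2 ⟨h₁.1, h₂.1, hj⟩, ?_⟩
  intro p hp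
  rcases List.mem_append.1 hp with hp | hp
  · exact h₁.2 p hp
  · exact h₂.2 p hp

theorem Red.cons {p : Σ i, G i} {l : List (Σ i, G i)} (hp : p.2 ∉ (φ p.1).range)
    (hl : Red φ l) (hj : ∀ q ∈ l.head?, p.1 ≠ q.1) : Red φ (p :: l) := by
  refine ⟨List.isChain_cons.2 ⟨hj, hl.1⟩, ?_⟩
  intro q hq
  rcases List.mem_cons.1 hq with rfl | hq
  · exact hp
  · exact hl.2 q hq

theorem Red.singleton {p : Σ i, G i} (hp : p.2 ∉ (φ p.1).range) : Red φ [p] :=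
  ⟨List.isChain_singleton p, by simpa using hp⟩

theorem Red.tail {p : Σ i, G i} {l : List (Σ i, G i)} (h : Red φ (p :: l)) :
    Red φ l :=
  ⟨(List.isChain_cons.1 h.1).2, fun q hq => h.2 q (List.mem_cons_of_mem _ hq)⟩

theorem head?_reverse_sinv (l : List (Σ i, G i)) :
    ((l.map sinv).reverse).head? = l.getLast?.map sinv := by
  rw [List.head?_reverse, List.getLast?_map]

theorem getLast?_reverse_sinv (l : List (Σ i, G i)) :
    ((l.map sinv).reverse).getLast? = l.head?.map sinv := by
  rw [List.getLast?_reverse, List.head?_map]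

theorem center_mem_base_range (hφ : ∀ i, Injective (φ i)) {i j : ι} (hij : i ≠ j)
    {a : G i} (ha : a ∉ (φ i).range) {b : G j} (hb : b ∉ (φ j).range)
    {z : PushoutI φ} (hz : ∀ g : PushoutI φ, z * g = g * z) :
    z ∈ (base φ).range := by
  obtain ⟨h, l, hl, rfl⟩ := exists_red hφ z
  rcases eq_or_ne l [] with rfl | hne
  · exact ⟨h, by simp [prodl_nil]⟩
  exfalso
  obtain ⟨lst, hlast?⟩ : ∃ p, l.getLast? = some p :=
    ⟨l.getLast hne, List.getLast?_eq_getLast hne⟩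
  -- pick a letter from a factor different from the last letter of l
  obtain ⟨k, c, hc, hk⟩ : ∃ (k : ι) (c : G k), c ∉ (φ k).range ∧ k ≠ lst.1 := by
    rcases eq_or_ne i lst.1 with heq | hi
    · exact ⟨j, b, hb, fun hj => hij (heq.trans hj.symm)⟩
    · exact ⟨i, a, ha, hi⟩
  obtain ⟨c₂, hc₂def⟩ : ∃ x : G k, x = φ k h⁻¹ * c * φ k h := ⟨_, rfl⟩
  have hc₂ : c₂ ∉ (φ k).range := by
    rintro ⟨r, hr⟩
    refine hc ⟨h * r * h⁻¹, ?_⟩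
    rw [map_mul, map_mul, hr, hc₂def, map_inv]
    group
  have key : prodl φ l * of k c * (prodl φ l)⁻¹ = of k c₂ := by
    have h2 : of k c₂ = (base φ h)⁻¹ * of k c * base φ h := by
      rw [hc₂def, map_mul, map_mul, of_apply_eq_base, of_apply_eq_base, map_inv]
    have h1 := hz (of k c)
    rw [h2]
    calc prodl φ l * of k c * (prodl φ l)⁻¹
        = (base φ h)⁻¹ * (base φ h * prodl φ l * of k c) * (prodl φ l)⁻¹ := by
          group
      _ = (base φ h)⁻¹ * (of k c * (base φ h * prodl φ l)) * (prodl φ l)⁻¹ := by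
          rw [h1]
      _ = (base φ h)⁻¹ * of k c * base φ h := by group
  have eq1 : prodl φ (l ++ ⟨k, c⟩ :: (l.map sinv).reverse) = of k c₂ := by
    rw [prodl_append, prodl_cons ⟨k, c⟩ ((l.map sinv).reverse),
      prodl_reverse_sinv, ← mul_assoc]
    exact key
  obtain ⟨⟨i₁, g₁⟩, t, rfl⟩ := List.exists_cons_of_ne_nil hne
  rcases eq_or_ne i₁ k with heq | hi1
  · -- first letter also from factor k: merge at the end
    subst heq
    -- t is nonempty
    obtain ⟨⟨i₂, g₂⟩, t', rfl⟩ : ∃ p t', t = p :: t' := by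
      rcases t with _ | ⟨p, t'⟩
      · exfalso
        simp only [List.getLast?_singleton, Option.some.injEq] at hlast?
        exact hk (by rw [← hlast?])
      · exact ⟨p, t', rfl⟩
    have hi2 : i₁ ≠ i₂ := (List.isChain_cons_cons.1 hl.1).1
    have htlast? : (⟨i₂, g₂⟩ :: t' : List (Σ i, G i)).getLast? = some lst := by
      rwa [List.getLast?_cons_cons] at hlast?
    have hredt : Red φ (⟨i₂, g₂⟩ :: t') := hl.tail
    have hrevlast : ((( ⟨i₂, g₂⟩ :: t' : List (Σ i, G i)).map sinv).reverse).getLast?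
        = some (sinv ⟨i₂, g₂⟩) := by
      rw [getLast?_reverse_sinv]
      rfl
    have hredN : Red φ ((⟨i₁, g₁⟩ :: ⟨i₂, g₂⟩ :: t') ++
        ⟨i₁, c⟩ :: ((( ⟨i₂, g₂⟩ :: t' : List (Σ i, G i)).map sinv).reverse)) := by
      refine Red.append hl (Red.cons hc (Red.reverse_sinv hredt) ?_) ?_
      · intro q hq
        rw [head?_reverse_sinv, htlast?] at hq
        simp only [Option.map_some, Option.mem_def, Option.some.injEq] at hq
        subst hq
        simpa using hk
      · intro p hp q hq
        rw [hlast?] at hp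
        simp only [Option.mem_def, Option.some.injEq, List.head?_cons] at hp hq
        subst hp
        cases hq
        exact hk.symm
    have hNlast : ((⟨i₁, g₁⟩ :: ⟨i₂, g₂⟩ :: t') ++
        ⟨i₁, c⟩ :: ((( ⟨i₂, g₂⟩ :: t' : List (Σ i, G i)).map sinv).reverse)).getLast?
        = some (sinv ⟨i₂, g₂⟩) := by
      rw [List.getLast?_append]
      rw [show (⟨i₁, c⟩ :: ((( ⟨i₂, g₂⟩ :: t' : List (Σ i, G i)).map sinv).reverse)
          : List (Σ i, G i)) =
        [⟨i₁, c⟩] ++ ((( ⟨i₂, g₂⟩ :: t' : List (Σ i, G i)).map sinv).reverse) from rfl]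
      rw [List.getLast?_append, hrevlast]
      rfl
    have eqN : prodl φ ((⟨i₁, g₁⟩ :: ⟨i₂, g₂⟩ :: t') ++
        ⟨i₁, c⟩ :: ((( ⟨i₂, g₂⟩ :: t' : List (Σ i, G i)).map sinv).reverse))
        = of i₁ (c₂ * g₁) := by
      have hrw : ((⟨i₁, g₁⟩ :: ⟨i₂, g₂⟩ :: t') ++
          (⟨i₁, c⟩ : Σ i, G i) ::
            ((( ⟨i₁, g₁⟩ :: ⟨i₂, g₂⟩ :: t' : List (Σ i, G i)).map sinv).reverse))
          = ((⟨i₁, g₁⟩ :: ⟨i₂, g₂⟩ :: t') ++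
          ⟨i₁, c⟩ :: ((( ⟨i₂, g₂⟩ :: t' : List (Σ i, G i)).map sinv).reverse))
            ++ [⟨i₁, g₁⁻¹⟩] := by
        show _ = _
        simp [sinv]
      rw [hrw, prodl_append, prodl_singleton] at eq1
      have : prodl φ ((⟨i₁, g₁⟩ :: ⟨i₂, g₂⟩ :: t') ++
          ⟨i₁, c⟩ :: ((( ⟨i₂, g₂⟩ :: t' : List (Σ i, G i)).map sinv).reverse))
          = of i₁ c₂ * (of i₁ g₁⁻¹)⁻¹ := by
        rw [← eq1]
        show _ = _ * (of i₁ (⟨i₁, g₁⁻¹⟩ : Σ i, G i).snd)⁻¹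
        group
      rw [this, map_inv, inv_inv, ← map_mul]
    by_cases hx : c₂ * g₁ ∈ (φ i₁).range
    · obtain ⟨r, hr⟩ := hx
      have hmem : prodl φ ((⟨i₁, g₁⟩ :: ⟨i₂, g₂⟩ :: t') ++
          ⟨i₁, c⟩ :: ((( ⟨i₂, g₂⟩ :: t' : List (Σ i, G i)).map sinv).reverse))
          ∈ (base φ).range := by
        rw [eqN, ← hr, of_apply_eq_base]
        exact ⟨r, rfl⟩
      have := red_eq_nil_of_mem_range hφ hredN hmem
      simp at this
    · have hredM : Red φ (((⟨i₁, g₁⟩ :: ⟨i₂, g₂⟩ :: t') ++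
          ⟨i₁, c⟩ :: ((( ⟨i₂, g₂⟩ :: t' : List (Σ i, G i)).map sinv).reverse))
          ++ [⟨i₁, (c₂ * g₁)⁻¹⟩]) := by
        refine Red.append hredN
          (Red.singleton (fun hmem => hx (by simpa using inv_mem hmem))) ?_
        intro p hp q hq
        rw [hNlast] at hp
        simp only [Option.mem_def, Option.some.injEq, List.head?_cons] at hp hq
        subst hp
        cases hq
        simpa using hi2.symm
      have hmem : prodl φ (((⟨i₁, g₁⟩ :: ⟨i₂, g₂⟩ :: t') ++
          ⟨i₁, c⟩ :: ((( ⟨i₂, g₂⟩ :: t' : List (Σ i, G i)).map sinv).reverse))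
          ++ [⟨i₁, (c₂ * g₁)⁻¹⟩]) ∈ (base φ).range := by
        rw [prodl_append, prodl_singleton, eqN]
        show of i₁ (c₂ * g₁) * of i₁ ((c₂ * g₁)⁻¹) ∈ _
        rw [map_inv, mul_inv_cancel]
        exact one_mem _
      have := red_eq_nil_of_mem_range hφ hredM hmem
      simp at this
  · -- first letter from a different factor
    have hredM : Red φ ((⟨i₁, g₁⟩ :: t) ++ ⟨k, c⟩ ::
        ((((⟨i₁, g₁⟩ :: t) : List (Σ i, G i)).map sinv).reverse ++ [⟨k, c₂⁻¹⟩])) := by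
      refine Red.append hl (Red.cons hc (Red.append (Red.reverse_sinv hl)
        (Red.singleton (by simpa using hc₂)) ?_) ?_) ?_
      · intro p hp q hq
        rw [getLast?_reverse_sinv] at hp
        simp only [List.head?_cons, Option.map_some, Option.mem_def,
          Option.some.injEq] at hp hq
        subst hp
        cases hq
        simpa using hi1
      · intro q hq
        rw [List.head?_append, head?_reverse_sinv, hlast?] at hq
        simp only [Option.map_some, Option.some_or, Option.mem_def,
          Option.some.injEq] at hq
        subst hq
        simpa using hk
      · intro p hp q hq
        rw [hlast?] at hp
        simp only [Option.mem_def, Option.some.injEq, List.head?_cons] at hp hq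
        subst hp
        cases hq
        exact hk.symm
    have hmem : prodl φ ((⟨i₁, g₁⟩ :: t) ++ ⟨k, c⟩ ::
        ((((⟨i₁, g₁⟩ :: t) : List (Σ i, G i)).map sinv).reverse ++ [⟨k, c₂⁻¹⟩]))
        ∈ (base φ).range := by
      have hrw : ((⟨i₁, g₁⟩ :: t) ++ (⟨k, c⟩ : Σ i, G i) ::
          ((((⟨i₁, g₁⟩ :: t) : List (Σ i, G i)).map sinv).reverse ++ [⟨k, c₂⁻¹⟩]))
          = ((⟨i₁, g₁⟩ :: t) ++ ⟨k, c⟩ ::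
            (((⟨i₁, g₁⟩ :: t) : List (Σ i, G i)).map sinv).reverse) ++ [⟨k, c₂⁻¹⟩] := by
        simp
      rw [hrw, prodl_append, prodl_singleton, eq1]
      show of k c₂ * of k (c₂⁻¹) ∈ _
      rw [map_inv, mul_inv_cancel]
      exact one_mem _
    have := red_eq_nil_of_mem_range hφ hredM hmem
    simp at this


end words
end GPAux

namespace GPAux
section decomp

open Monoid Function

variable {V : Type*} (Γ : SimpleGraph V) (G : V → Type u) [∀ v, Group (G v)]

def stS (u : V) : Set V := {x | x = u ∨ Γ.Adj u x}
def lkS (u : V) : Set V := {x | Γ.Adj u x}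

theorem lk_subset_st (u : V) : lkS Γ u ⊆ stS Γ u := fun _ hx => Or.inr hx

def setFam (u : V) : Bool → Set V := fun b =>
  cond b (stS Γ u) {x | x ≠ u}

theorem lk_subset_fam (u : V) (b : Bool) : lkS Γ u ⊆ setFam Γ u b :=
  Bool.casesOn (motive := fun b => lkS Γ u ⊆ setFam Γ u b) b
    (fun _ hx => (Γ.ne_of_adj hx).symm) (fun _ hx => Or.inr hx)

/-- the two factors of the amalgam decomposition -/
def famφ (u : V) (b : Bool) :
    SubGP Γ G (lkS Γ u) →* SubGP Γ G (setFam Γ u b) :=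
  inclHom Γ G (lk_subset_fam Γ u b)

theorem famφ_injective (u : V) (b : Bool) : Injective (famφ Γ G u b) :=
  inclHom_injective Γ G (lk_subset_fam Γ u b)

theorem bridge (u : V) {x : V} (hxt : x ∈ setFam Γ u true)
    (hxf : x ∈ setFam Γ u false) (hx : Γ.Adj u x) (g : G x) :
    PushoutI.of (φ := famφ Γ G u) false
      (gpOf (Γ.comap (Subtype.val : setFam Γ u false → V))
        (fun s : setFam Γ u false => G s.val) ⟨x, hxf⟩ g)
    = PushoutI.of (φ := famφ Γ G u) true
      (gpOf (Γ.comap (Subtype.val : setFam Γ u true → V))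
        (fun s : setFam Γ u true => G s.val) ⟨x, hxt⟩ g) := by
  have h1 : famφ Γ G u false
      (gpOf (Γ.comap (Subtype.val : lkS Γ u → V))
        (fun s : lkS Γ u => G s.val) (⟨x, hx⟩ : lkS Γ u) g)
      = gpOf _ (fun s : setFam Γ u false => G s.val) ⟨x, hxf⟩ g := by
    rw [famφ, inclHom_of]
  have h2 : famφ Γ G u true
      (gpOf (Γ.comap (Subtype.val : lkS Γ u → V))
        (fun s : lkS Γ u => G s.val) (⟨x, hx⟩ : lkS Γ u) g)
      = gpOf _ (fun s : setFam Γ u true => G s.val) ⟨x, hxt⟩ g := by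
    rw [famφ, inclHom_of]
  rw [← h1, ← h2, PushoutI.of_apply_eq_base, PushoutI.of_apply_eq_base]

noncomputable def toPush (u : V) :
    GraphProduct Γ G →* Monoid.PushoutI (famφ Γ G u) := by
  classical
  refine gpLift
    (fun v => if h : v = u then
        (PushoutI.of (φ := famφ Γ G u) true).comp
          (gpOf (Γ.comap (Subtype.val : setFam Γ u true → V))
            (fun s : setFam Γ u true => G s.val) ⟨v, Or.inl h⟩)
      else
        (PushoutI.of (φ := famφ Γ G u) false).comp
          (gpOf (Γ.comap (Subtype.val : setFam Γ u false → V))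
            (fun s : setFam Γ u false => G s.val) ⟨v, h⟩))
    ?_
  intro v w hadj a b
  by_cases hv : v = u
  · subst hv
    have hw : w ≠ v := (Γ.ne_of_adj hadj).symm
    beta_reduce
    rw [dif_pos (rfl : v = v), dif_neg hw]
    simp only [MonoidHom.comp_apply]
    rw [bridge Γ G v (Or.inr hadj) hw hadj b]
    exact (gpOf_commute
      (Γ := Γ.comap (Subtype.val : setFam Γ v true → V))
      (G := fun s : setFam Γ v true => G s.val)
      (show (Γ.comap (Subtype.val : setFam Γ v true → V)).Adj ⟨v, Or.inl rfl⟩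
        ⟨w, Or.inr hadj⟩ from hadj) a b).map _
  · by_cases hw : w = u
    · subst hw
      have hadj' : Γ.Adj w v := hadj.symm
      beta_reduce
      rw [dif_pos (rfl : w = w), dif_neg hv]
      simp only [MonoidHom.comp_apply]
      rw [bridge Γ G w (Or.inr hadj') hv hadj' a]
      exact (gpOf_commute
        (Γ := Γ.comap (Subtype.val : setFam Γ w true → V))
        (G := fun s : setFam Γ w true => G s.val)
        (show (Γ.comap (Subtype.val : setFam Γ w true → V)).Adj ⟨v, Or.inr hadj'⟩
          ⟨w, Or.inl rfl⟩ from hadj) a b).map _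
    · beta_reduce
      rw [dif_neg hv, dif_neg hw]
      simp only [MonoidHom.comp_apply]
      exact (gpOf_commute
        (Γ := Γ.comap (Subtype.val : setFam Γ u false → V))
        (G := fun s : setFam Γ u false => G s.val)
        (show (Γ.comap (Subtype.val : setFam Γ u false → V)).Adj ⟨v, hv⟩
          ⟨w, hw⟩ from hadj) a b).map _

noncomputable def fromPush (u : V) :
    Monoid.PushoutI (famφ Γ G u) →* GraphProduct Γ G :=
  PushoutI.lift (fun b => inc Γ G (setFam Γ u b)) (inc Γ G (lkS Γ u))
    (fun b => inc_comp_inclHom Γ G (lk_subset_fam Γ u b))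

theorem fromPush_of (u : V) (b : Bool) (x : SubGP Γ G (setFam Γ u b)) :
    fromPush Γ G u (PushoutI.of (φ := famφ Γ G u) b x)
      = inc Γ G (setFam Γ u b) x := by
  rw [fromPush]
  exact PushoutI.lift_of _ _ _ _

theorem fromPush_base (u : V) (x : SubGP Γ G (lkS Γ u)) :
    fromPush Γ G u (PushoutI.base (famφ Γ G u) x) = inc Γ G (lkS Γ u) x := by
  rw [fromPush]
  exact PushoutI.lift_base _ _ _ _

theorem toPush_of_self (u : V) (a : G u) :
    toPush Γ G u (gpOf Γ G u a) = PushoutI.of (φ := famφ Γ G u) true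
      (gpOf (Γ.comap (Subtype.val : setFam Γ u true → V))
        (fun s : setFam Γ u true => G s.val) ⟨u, Or.inl rfl⟩ a) := by
  rw [toPush, gpLift_of, dif_pos rfl]
  rfl

theorem toPush_of_ne (u : V) {v : V} (h : v ≠ u) (a : G v) :
    toPush Γ G u (gpOf Γ G v a) = PushoutI.of (φ := famφ Γ G u) false
      (gpOf (Γ.comap (Subtype.val : setFam Γ u false → V))
        (fun s : setFam Γ u false => G s.val) ⟨v, h⟩ a) := by
  rw [toPush, gpLift_of, dif_neg h]
  rfl

theorem fromPush_toPush (u : V) :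
    (fromPush Γ G u).comp (toPush Γ G u) = MonoidHom.id _ := by
  classical
  apply gp_hom_ext
  intro v a
  simp only [MonoidHom.comp_apply, MonoidHom.id_apply]
  by_cases hv : v = u
  · subst hv
    rw [toPush_of_self, fromPush_of, inc_of]
  · rw [toPush_of_ne Γ G u hv, fromPush_of, inc_of]

theorem toPush_fromPush (u : V) :
    (toPush Γ G u).comp (fromPush Γ G u) = MonoidHom.id _ := by
  classical
  apply PushoutI.hom_ext_nonempty
  intro b
  cases b
  · -- b = false
    apply gp_hom_ext
    intro s a
    simp only [MonoidHom.comp_apply, MonoidHom.id_apply]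
    rw [fromPush_of, inc_of, toPush_of_ne Γ G u s.prop]
  · -- b = true
    apply gp_hom_ext
    intro s a
    simp only [MonoidHom.comp_apply, MonoidHom.id_apply]
    rw [fromPush_of, inc_of]
    by_cases hsu : s.val = u
    · have hs : s = ⟨u, Or.inl rfl⟩ := Subtype.ext hsu
      subst hs
      rw [toPush_of_self]
    · have hadj : Γ.Adj u s.val := s.prop.resolve_left hsu
      rw [toPush_of_ne Γ G u hsu,
        bridge Γ G u s.prop hsu hadj a]

end decomp

section descent

open Monoid Function

variable {V : Type*} (Γ : SimpleGraph V) (G : V → Type u) [∀ v, CommGroup (G v)]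
  [∀ v, Nontrivial (G v)]

theorem descent (u w : V) (hwu : w ≠ u) (hnadj : ¬Γ.Adj u w)
    {z : GraphProduct Γ G} (hz : z ∈ Subgroup.center (GraphProduct Γ G)) :
    z ∈ parab Γ G {x | Γ.Adj u x} := by
  classical
  have hcent : ∀ g : Monoid.PushoutI (famφ Γ G u),
      toPush Γ G u z * g = g * toPush Γ G u z := by
    intro g
    have hg : toPush Γ G u (fromPush Γ G u g) = g :=
      DFunLike.congr_fun (toPush_fromPush Γ G u) g
    rw [← hg, ← map_mul, ← map_mul]
    congr 1
    exact (Subgroup.mem_center_iff.1 hz _).symm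
  obtain ⟨g₀, hg₀⟩ := exists_ne (1 : G u)
  obtain ⟨w₀, hw₀⟩ := exists_ne (1 : G w)
  have ha : (gpOf (Γ.comap (Subtype.val : setFam Γ u true → V))
        (fun s : setFam Γ u true => G s.val) ⟨u, Or.inl rfl⟩ g₀)
      ∉ (famφ Γ G u true).range := by
    rintro ⟨c, hc⟩
    apply hg₀
    have := congr_arg (gpProj (Γ := Γ.comap (Subtype.val : setFam Γ u true → V))
      (G := fun s : setFam Γ u true => G s.val)
      (⟨u, Or.inl rfl⟩ : setFam Γ u true)) hc
    rw [gpProj_of_same] at this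
    rw [← this]
    exact (gpProj_inclHom (lk_subset_fam Γ u true)
      (⟨u, Or.inl rfl⟩ : setFam Γ u true)
      (fun hu => Γ.irrefl (hu : Γ.Adj u u)) c).symm ▸
      (gpProj_inclHom (lk_subset_fam Γ u true) (⟨u, Or.inl rfl⟩ : setFam Γ u true)
      (fun hu => Γ.irrefl (hu : Γ.Adj u u)) c)
  have hb : (gpOf (Γ.comap (Subtype.val : setFam Γ u false → V))
        (fun s : setFam Γ u false => G s.val) ⟨w, hwu⟩ w₀)
      ∉ (famφ Γ G u false).range := by
    rintro ⟨c, hc⟩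
    apply hw₀
    have := congr_arg (gpProj (Γ := Γ.comap (Subtype.val : setFam Γ u false → V))
      (G := fun s : setFam Γ u false => G s.val)
      (⟨w, hwu⟩ : setFam Γ u false)) hc
    rw [gpProj_of_same] at this
    rw [← this]
    exact gpProj_inclHom (lk_subset_fam Γ u false) (⟨w, hwu⟩ : setFam Γ u false)
      (fun hw' => hnadj (hw' : Γ.Adj u w)) c
  have hbase := center_mem_base_range (famφ_injective Γ G u)
    (i := true) (j := false) (by simp) ha hb hcent
  obtain ⟨c, hc⟩ := hbase
  have hz' : z = inc Γ G (lkS Γ u) c := by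
    have h1 : fromPush Γ G u (toPush Γ G u z) = z :=
      DFunLike.congr_fun (fromPush_toPush Γ G u) z
    rw [← h1, ← hc, fromPush_base]
  rw [hz']
  have hmem : inc Γ G (lkS Γ u) c ∈ (inc Γ G (lkS Γ u)).range := ⟨c, rfl⟩
  rw [range_inc] at hmem
  exact hmem

end descent
end GPAux

namespace GPAux

section main

open Monoid Function

variable {V : Type*} (Γ : SimpleGraph V) (G : V → Type u) [∀ v, CommGroup (G v)]
  [∀ v, Nontrivial (G v)]

theorem inc_parab (S : Set V) (X : Set S) {z : SubGP Γ G S}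
    (h : z ∈ parab (Γ.comap (Subtype.val : S → V)) (fun s : S => G s.val) X) :
    inc Γ G S z ∈ parab Γ G (Subtype.val '' X) := by
  induction h using Subgroup.closure_induction with
  | mem x hx =>
      simp only [Set.mem_iUnion, Set.mem_range] at hx
      obtain ⟨s, hs, a, rfl⟩ := hx
      rw [inc_of]
      exact Subgroup.subset_closure
        (Set.mem_biUnion ⟨s, hs, rfl⟩ (Set.mem_range_self a))
  | one => rw [map_one]; exact one_mem _
  | mul x y hx hy ihx ihy => rw [map_mul]; exact mul_mem ihx ihy
  | inv x hx ihx => rw [map_inv]; exact inv_mem ihx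

theorem central_in_parab_eq_one [Fintype V]
    (hdom : ∀ v : V, ¬ ∀ x : V, x = v ∨ Γ.Adj v x) :
    ∀ (n : ℕ) (S : Set V), S.ncard ≤ n →
      ∀ z ∈ Subgroup.center (GraphProduct Γ G), z ∈ parab Γ G S → z = 1 := by
  intro n
  induction n with
  | zero =>
      intro S hS z hzc hzp
      have hempty : S = ∅ := (Set.ncard_eq_zero (S.toFinite)).1 (le_antisymm hS (Nat.zero_le _))
      rw [hempty, parab_empty, Subgroup.mem_bot] at hzp
      exact hzp
  | succ n ih =>
      intro S hS z hzc hzp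
      rcases S.eq_empty_or_nonempty with rfl | ⟨u, huS⟩
      · rw [parab_empty, Subgroup.mem_bot] at hzp
        exact hzp
      obtain ⟨w, hwu, hnadj⟩ : ∃ w, w ≠ u ∧ ¬Γ.Adj u w := by
        have := hdom u
        push_neg at this
        exact this
      obtain ⟨S', hS'⟩ : ∃ S' : Set V, S' = insert w S := ⟨_, rfl⟩
      have huS' : u ∈ S' := hS' ▸ Set.mem_insert_of_mem w huS
      have hwS' : w ∈ S' := hS' ▸ Set.mem_insert w S
      have hzp' : z ∈ parab Γ G S' := by
        rw [hS']
        exact parab_mono Γ G (Set.subset_insert w S) hzp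
      rw [← range_inc] at hzp'
      obtain ⟨z', rfl⟩ := hzp'
      have hz'c : z' ∈ Subgroup.center (SubGP Γ G S') := by
        rw [Subgroup.mem_center_iff]
        intro g'
        apply inc_injective Γ G S'
        rw [map_mul, map_mul]
        exact Subgroup.mem_center_iff.1 hzc (inc Γ G S' g')
      have hdesc := descent (Γ.comap (Subtype.val : S' → V))
        (fun s : S' => G s.val)
        (⟨u, huS'⟩ : S') (⟨w, hwS'⟩ : S')
        (fun h => hwu (congrArg Subtype.val h))
        (fun h => hnadj h)
        hz'c
      have hpush := inc_parab Γ G S' _ hdesc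
      -- the image set is contained in S \ {u}
      have hsub : (Subtype.val ''
          {x : S' | (Γ.comap (Subtype.val : S' → V)).Adj ⟨u, huS'⟩ x})
          ⊆ S \ {u} := by
        rintro y ⟨x, hx, rfl⟩
        have hadj : Γ.Adj u x.val := hx
        constructor
        · have hxmem : x.val ∈ insert w S := hS' ▸ x.prop
          rcases Set.mem_insert_iff.1 hxmem with h | h
          · exact absurd (h ▸ hadj) hnadj
          · exact h
        · exact fun h => Γ.irrefl ((Set.mem_singleton_iff.1 h) ▸ hadj)
      have hzS : inc Γ G S' z' ∈ parab Γ G (S \ {u}) :=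
        parab_mono Γ G hsub hpush
      refine ih (S \ {u}) ?_ _ hzc hzS
      have hlt : (S \ {u}).ncard < S.ncard :=
        Set.ncard_diff_singleton_lt_of_mem huS (S.toFinite)
      omega

theorem center_eq_bot [Fintype V]
    (hdom : ∀ v : V, ¬ ∀ x : V, x = v ∨ Γ.Adj v x) :
    Subgroup.center (GraphProduct Γ G) = ⊥ := by
  rw [eq_bot_iff]
  intro z hz
  rw [Subgroup.mem_bot]
  exact central_in_parab_eq_one Γ G hdom (Set.univ.ncard) Set.univ le_rfl z hz
    (mem_parab_univ Γ G z)

end main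

end GPAux


/-- A graph product of nontrivial finitely generated abelian groups on a graph
with at least two vertices has nontrivial center iff some vertex is adjacent to
all other vertices (i.e. `st v = V`). -/
theorem graph_product_nontrivial_center_iff {V : Type*} [Fintype V]
    (Γ : SimpleGraph V) (G : V → Type u) [∀ v, CommGroup (G v)]
    [∀ v, Group.FG (G v)] [∀ v, Nontrivial (G v)]
    (hV : 2 ≤ Fintype.card V) :
    Nontrivial (Subgroup.center (GraphProduct Γ G)) ↔
      ∃ v : V, ∀ w : V, w = v ∨ Γ.Adj v w := by
  constructor
  · intro hnt
    by_contra hdom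
    push_neg at hdom
    have hbot := GPAux.center_eq_bot Γ G (fun v hv => by
      obtain ⟨w, hw1, hw2⟩ := hdom v
      rcases hv w with h | h
      · exact hw1 h
      · exact hw2 h)
    obtain ⟨⟨x, hx⟩, ⟨y, hy⟩, hxy⟩ := hnt
    apply hxy
    rw [hbot, Subgroup.mem_bot] at hx hy
    exact Subtype.ext (hx.trans hy.symm)
  · rintro ⟨v, hv⟩
    obtain ⟨a, ha⟩ := exists_ne (1 : G v)
    have hcent : GPAux.gpOf Γ G v a ∈ Subgroup.center (GraphProduct Γ G) := by
      rw [Subgroup.mem_center_iff]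
      intro g
      induction g using GPAux.gp_induction_on with
      | one => rw [one_mul, mul_one]
      | of w b =>
          rcases hv w with rfl | hadj
          · rw [← map_mul, ← map_mul, mul_comm]
          · exact (GPAux.gpOf_commute hadj a b).symm.eq
      | mul x y hx hy =>
          rw [mul_assoc, hy, ← mul_assoc, hx, mul_assoc]
    refine ⟨⟨⟨GPAux.gpOf Γ G v a, hcent⟩, 1, fun h => ?_⟩⟩
    have h1 : GPAux.gpOf Γ G v a = 1 := by
      simpa using congrArg Subtype.val h
    exact GPAux.gpOf_ne_one ha h1
end

section
/- Let Γ = (V,E) be a graph in which no vertex v satisfies st(v) = V, and suppose the graph product W_Γ of primary or infinite cyclic vertex groups decomposes as a direct product of truncated subgroups W_{Γ_{V₁}} × W_{Γ_{V₂}} with V = V₁ ⊔ V₂. Then both V₁ and V₂ are lower cones with respect to the transvection preorder ≤_τ. -/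
universe u

/-- The star of a vertex: the vertex together with its neighbours. -/
def vertexStar {V : Type*} (Γ : SimpleGraph V) (v : V) : Set V :=
  insert v (Γ.neighborSet v)

/-- A group is `p`-primary cyclic if it is isomorphic to `ℤ/p^k` for some `k ≥ 1`. -/
def IsPrimaryCyclic (G : Type*) [Group G] (p : ℕ) : Prop :=
  ∃ k : ℕ, 1 ≤ k ∧ Nonempty (G ≃* Multiplicative (ZMod (p ^ k)))

/-- The transvection preorder `v ≤_τ w` on vertices of a graph product with
primary or infinite cyclic vertex groups: the reflexive closure of "the
dominated transvection `τ_{v,w}` is defined", i.e. for `G v` infinite cyclic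
one needs `lk(v) ⊆ st(w)`, and for `G v`, `G w` primary for the same prime one
needs `st(v) ⊆ st(w)`. -/
def leTau {V : Type*} (Γ : SimpleGraph V) (G : V → Type u) [∀ v, Group (G v)]
    (v w : V) : Prop :=
  v = w ∨ (v ≠ w ∧
    ((Nonempty (G v ≃* Multiplicative ℤ) ∧
        Γ.neighborSet v ⊆ vertexStar Γ w) ∨
     (∃ p : ℕ, p.Prime ∧ IsPrimaryCyclic (G v) p ∧ IsPrimaryCyclic (G w) p ∧
        vertexStar Γ v ⊆ vertexStar Γ w)))

/-- The equivalence relation induced by the preorder `≤_τ`. -/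
def simTau {V : Type*} (Γ : SimpleGraph V) (G : V → Type u) [∀ v, Group (G v)]
    (v w : V) : Prop :=
  leTau Γ G v w ∧ leTau Γ G w v

/-- A lower cone for a relation `r`. -/
def IsLowerCone {Y : Type*} (r : Y → Y → Prop) (X : Set Y) : Prop :=
  ∀ t ∈ X, ∀ s : Y, r s t → s ∈ X

lemma lowerCone_aux {V : Type*} (Γ : SimpleGraph V) (G : V → Type u)
    [∀ v, Group (G v)]
    (hstar : ∀ v : V, vertexStar Γ v ≠ Set.univ)
    (A B : Set V) (hunion : A ∪ B = Set.univ)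
    (hjoin : ∀ v ∈ A, ∀ w ∈ B, Γ.Adj v w) :
    IsLowerCone (leTau Γ G) A := by
  intro t ht s hst
  by_contra hsA
  have hsB : s ∈ B := by
    have : s ∈ A ∪ B := hunion ▸ Set.mem_univ s
    rcases this with h | h
    · exact absurd h hsA
    · exact h
  have hsub : Γ.neighborSet s ⊆ vertexStar Γ t := by
    rcases hst with rfl | ⟨hne, hcase⟩
    · exact absurd ht hsA
    rcases hcase with ⟨_, hsub⟩ | ⟨p, _, _, _, hsub⟩
    · exact hsub
    · exact fun x hx => hsub (Set.mem_insert_of_mem _ hx)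
  apply hstar t
  apply Set.eq_univ_of_forall
  intro x
  have hx : x ∈ A ∪ B := hunion ▸ Set.mem_univ x
  rcases hx with hx | hx
  · exact hsub ((hjoin x hx s hsB).symm)
  · by_cases hxt : x = t
    · subst hxt; exact Set.mem_insert x _
    · exact Set.mem_insert_of_mem _ (hjoin t ht x hx)

/-- If no vertex of `Γ` satisfies `st(v) = V` and the graph product `W_Γ` (with
primary or infinite cyclic vertex groups) decomposes as a direct product of the
truncated subgroups on `V₁` and `V₂` (equivalently: `V = V₁ ⊔ V₂` and every
vertex of `V₁` is adjacent to every vertex of `V₂`), then both `V₁` and `V₂`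
are lower cones with respect to `≤_τ`. -/
theorem direct_truncated_factors_are_lower_cones {V : Type*}
    (Γ : SimpleGraph V) (G : V → Type u) [∀ v, Group (G v)]
    (hvert : ∀ v : V, Nonempty (G v ≃* Multiplicative ℤ) ∨
      ∃ p : ℕ, p.Prime ∧ IsPrimaryCyclic (G v) p)
    (hstar : ∀ v : V, vertexStar Γ v ≠ Set.univ)
    (V₁ V₂ : Set V) (hne₁ : V₁.Nonempty) (hne₂ : V₂.Nonempty)
    (hdisj : Disjoint V₁ V₂) (hunion : V₁ ∪ V₂ = Set.univ)
    (hjoin : ∀ v ∈ V₁, ∀ w ∈ V₂, Γ.Adj v w) :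
    IsLowerCone (leTau Γ G) V₁ ∧ IsLowerCone (leTau Γ G) V₂ := by
  constructor
  · exact lowerCone_aux Γ G hstar V₁ V₂ hunion hjoin
  · exact lowerCone_aux Γ G hstar V₂ V₁ (by rw [Set.union_comm]; exact hunion)
      (fun v hv w hw => (hjoin w hw v hv).symm)
end

section
/- If M ⊆ V is a minimal equivalence class of the relation ∼_τ, then M ∪ L_M is a lower cone with respect to ≤_τ, where L_M = {v ∈ V : st(v) ⊆ V − M}. Moreover, if all vertex groups are finite, then L_M itself is a lower cone for any subset M ⊆ V. -/
universe u

/-- `L_M`: the set of vertices `v` with `st(v) ⊆ V − M`, i.e. vertices that do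
not commute with (and are distinct from) every vertex of `M`. -/
def lowerL {V : Type*} (Γ : SimpleGraph V) (M : Set V) : Set V :=
  {v | vertexStar Γ v ⊆ Mᶜ}

/-- For a minimal equivalence class `M` of `∼_τ` (minimality being expressed by
saying that anything `≤_τ`-below an element of `M` lies in `M`), the set
`M ∪ L_M` is a lower cone for `≤_τ`; moreover if all vertex groups are finite
then `L_M` is itself a lower cone for every subset `M ⊆ V`. -/
theorem class_union_lowerL_is_lower_cone {V : Type*}
    (Γ : SimpleGraph V) (G : V → Type u) [∀ v, Group (G v)]
    (hvert : ∀ v : V, Nonempty (G v ≃* Multiplicative ℤ) ∨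
      ∃ p : ℕ, p.Prime ∧ IsPrimaryCyclic (G v) p) :
    (∀ M : Set V, (∃ v₀ : V, M = {w | simTau Γ G w v₀}) →
      (∀ w v : V, v ∈ M → leTau Γ G w v → w ∈ M) →
      IsLowerCone (leTau Γ G) (M ∪ lowerL Γ M)) ∧
    ((∀ v : V, Finite (G v)) →
      ∀ M : Set V, IsLowerCone (leTau Γ G) (lowerL Γ M)) := by
  constructor
  · rintro M - hmin t ht s hst
    rcases ht with ht | ht
    · exact Or.inl (hmin s t ht hst)
    · rcases hst with rfl | ⟨hne, h⟩
      · exact Or.inr ht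
      rcases h with ⟨-, hsub⟩ | ⟨p, -, -, -, hsub⟩
      · by_cases hsM : s ∈ M
        · exact Or.inl hsM
        · refine Or.inr ?_
          intro x hx
          rcases hx with rfl | hx
          · exact hsM
          · exact ht (hsub hx)
      · exact Or.inr fun x hx => ht (hsub hx)
  · intro hfin M t ht s hst
    rcases hst with rfl | ⟨hne, h⟩
    · exact ht
    rcases h with ⟨⟨e⟩, -⟩ | ⟨p, -, -, -, hsub⟩
    · haveI : Finite (Multiplicative ℤ) := Finite.of_equiv _ e.toEquiv
      exact (not_finite (Multiplicative ℤ)).elim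
    · exact fun x hx => ht (hsub hx)
end
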